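/- Positive association (FKG) for the random-cluster measure: if p∈(0,1) and q≥1, then for all increasing functions f,g on {0,1}^E, φ_{p,q}(fg) ≥ φ_{p,q}(f)φ_{p,q}(g). -/

import Mathlib

open scoped BigOperators Classical

noncomputable section

/-- Number of connected components (including isolated vertices) of the graph `(V, A)`. -/
def numComp {V : Type} [Fintype V] (A : Finset (Sym2 V)) : ℕ :=
  Nat.card (SimpleGraph.fromEdgeSet (A : Set (Sym2 V))).ConnectedComponent

/-- Random-cluster weight of the configuration with open edge-set `A ⊆ E`. -/
def rcWeight {V : Type} [Fintype V] (E : Finset (Sym2 V)) (p q : ℝ)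
    (A : Finset (Sym2 V)) : ℝ :=
  p ^ A.card * (1 - p) ^ (E.card - A.card) * q ^ numComp A

/-- Random-cluster partition function. -/
def ZRC {V : Type} [Fintype V] (E : Finset (Sym2 V)) (p q : ℝ) : ℝ :=
  ∑ A ∈ E.powerset, rcWeight E p q A

/-- Potts weight `exp(β · #{monochromatic edges})` of a spin configuration `σ`. -/
def pottsWeight {V : Type} [Fintype V] [DecidableEq V] (E : Finset (Sym2 V)) (β : ℝ) (q : ℕ)
    (σ : V → Fin q) : ℝ :=
  Real.exp (β * ((E.filter (fun e => (e.map σ).IsDiag)).card : ℝ))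

/-- Potts partition function. -/
def ZP {V : Type} [Fintype V] [DecidableEq V] (E : Finset (Sym2 V)) (β : ℝ) (q : ℕ) : ℝ :=
  ∑ σ : V → Fin q, pottsWeight E β q σ

/-- The event `F`: the spin configuration `σ` is constant on every open edge of `A`. -/
def consistent {V : Type} (q : ℕ) (σ : V → Fin q) (A : Finset (Sym2 V)) : Prop :=
  ∀ e ∈ A, (e.map σ).IsDiag

/-- Weight of the Potts/random-cluster coupling measure `μ(σ, ω) ∝ ψ(σ) φ_p(ω) 1_F(σ,ω)`. -/
def muWeight {V : Type} [Fintype V] (E : Finset (Sym2 V)) (p : ℝ) (q : ℕ)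
    (σ : V → Fin q) (A : Finset (Sym2 V)) : ℝ :=
  ((q : ℝ) ^ Fintype.card V)⁻¹ * (p ^ A.card * (1 - p) ^ (E.card - A.card)) *
    (if consistent q σ A then 1 else 0)

/-- Normalising constant of the coupling measure. -/
def Zmu {V : Type} [Fintype V] [DecidableEq V] (E : Finset (Sym2 V)) (p : ℝ) (q : ℕ) : ℝ :=
  ∑ σ : V → Fin q, ∑ A ∈ E.powerset, muWeight E p q σ A

/-- Expectation of `f` under the random-cluster measure `φ_{p,q}`. -/
def rcExp {V : Type} [Fintype V] (E : Finset (Sym2 V)) (p q : ℝ)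
    (f : Finset (Sym2 V) → ℝ) : ℝ :=
  (∑ A ∈ E.powerset, rcWeight E p q A * f A) / ZRC E p q

section Aux

open SimpleGraph

set_option linter.unusedSectionVars false

variable {V : Type} [Fintype V] [DecidableEq V]

/-- walk lemma -/
lemma reach_insert {s : Set (Sym2 V)} {u v a b : V}
    (h : (fromEdgeSet (insert s(u,v) s)).Reachable a b) :
    (fromEdgeSet s).Reachable a b ∨
    ((fromEdgeSet s).Reachable a u ∧ (fromEdgeSet s).Reachable v b) ∨
    ((fromEdgeSet s).Reachable a v ∧ (fromEdgeSet s).Reachable u b) := by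
  obtain ⟨p⟩ := h
  induction p with
  | nil => exact Or.inl (Reachable.refl _)
  | @cons x y z h' p ih =>
    rw [fromEdgeSet_adj, Set.mem_insert_iff] at h'
    obtain ⟨(he | hs), hne⟩ := h'
    · rw [Sym2.eq_iff] at he
      rcases he with ⟨rfl, rfl⟩ | ⟨rfl, rfl⟩
      · rcases ih with hr | ⟨h1, h2⟩ | ⟨h1, h2⟩
        · exact Or.inr (Or.inl ⟨Reachable.refl _, hr⟩)
        · exact Or.inl ((h1.symm).trans h2)
        · exact Or.inl h2
      · rcases ih with hr | ⟨h1, h2⟩ | ⟨h1, h2⟩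
        · exact Or.inr (Or.inr ⟨Reachable.refl _, hr⟩)
        · exact Or.inl h2
        · exact Or.inl ((h1.symm).trans h2)
    · have hax : (fromEdgeSet s).Reachable x y := SimpleGraph.Adj.reachable ((fromEdgeSet_adj _).mpr ⟨hs, hne⟩)
      rcases ih with hr | ⟨h1, h2⟩ | ⟨h1, h2⟩
      · exact Or.inl (hax.trans hr)
      · exact Or.inr (Or.inl ⟨hax.trans h1, h2⟩)
      · exact Or.inr (Or.inr ⟨hax.trans h1, h2⟩)

lemma compMap_surj {s t : Finset (Sym2 V)} (h : s ⊆ t) :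
    Function.Surjective (ConnectedComponent.map
      (Hom.ofLE (fromEdgeSet_mono (by exact_mod_cast h)) :
        fromEdgeSet (s : Set (Sym2 V)) →g fromEdgeSet (t : Set (Sym2 V)))) := by
  intro c
  refine c.ind (fun v => ⟨(fromEdgeSet (s : Set (Sym2 V))).connectedComponentMk v, rfl⟩)

lemma numComp_mono {s t : Finset (Sym2 V)} (h : s ⊆ t) : numComp t ≤ numComp s :=
  Nat.card_le_card_of_surjective _ (compMap_surj h)

lemma numComp_insert_eq {s : Finset (Sym2 V)} {u v : V}
    (huv : (fromEdgeSet (s : Set (Sym2 V))).Reachable u v) :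
    numComp (insert s(u,v) s) = numComp s := by
  have hsub : s ⊆ insert s(u,v) s := Finset.subset_insert _ _
  have hco : ((insert s(u,v) s : Finset (Sym2 V)) : Set (Sym2 V)) = insert s(u,v) (s : Set (Sym2 V)) := by
    simp
  symm
  refine (Nat.card_eq_of_bijective _ ⟨?_, compMap_surj hsub⟩)
  refine ConnectedComponent.ind₂ (fun a b hab => ?_)
  simp only [ConnectedComponent.map_mk, Hom.ofLE_apply,
    ConnectedComponent.eq] at hab ⊢
  rw [hco] at hab
  rcases reach_insert hab with hr | ⟨h1, h2⟩ | ⟨h1, h2⟩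
  · exact hr
  · exact h1.trans (huv.trans h2)
  · exact h1.trans (huv.symm.trans h2)

lemma numComp_insert_lt {s : Finset (Sym2 V)} {u v : V} (hne : u ≠ v)
    (huv : ¬ (fromEdgeSet (s : Set (Sym2 V))).Reachable u v) :
    numComp (insert s(u,v) s) < numComp s := by
  have hsub : s ⊆ insert s(u,v) s := Finset.subset_insert _ _
  rcases lt_or_eq_of_le (numComp_mono hsub) with h | h
  · exact h
  exfalso
  have hbij := (Nat.bijective_iff_surjective_and_card _).mpr ⟨compMap_surj hsub, h.symm⟩
  have hadj : (fromEdgeSet ((insert s(u,v) s : Finset (Sym2 V)) : Set (Sym2 V))).Adj u v := by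
    rw [fromEdgeSet_adj]
    exact ⟨by simp, hne⟩
  have := hbij.injective (a₁ := (fromEdgeSet (s : Set (Sym2 V))).connectedComponentMk u)
    (a₂ := (fromEdgeSet (s : Set (Sym2 V))).connectedComponentMk v) (by
      simp only [ConnectedComponent.map_mk, Hom.ofLE_apply,
        ConnectedComponent.eq]
      exact hadj.reachable)
  exact huv (ConnectedComponent.exact this)

lemma numComp_le_insert {s : Finset (Sym2 V)} {u v : V} :
    numComp s ≤ numComp (insert s(u,v) s) + 1 := by
  classical
  have hsub : s ⊆ insert s(u,v) s := Finset.subset_insert _ _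
  set G := fromEdgeSet (s : Set (Sym2 V))
  set G' := fromEdgeSet ((insert s(u,v) s : Finset (Sym2 V)) : Set (Sym2 V))
  set π : G.ConnectedComponent → G'.ConnectedComponent :=
    ConnectedComponent.map (Hom.ofLE (fromEdgeSet_mono (by exact_mod_cast hsub)))
  have hco : ((insert s(u,v) s : Finset (Sym2 V)) : Set (Sym2 V)) = insert s(u,v) (s : Set (Sym2 V)) := by
    simp
  have hinj : Function.Injective
      (fun c : G.ConnectedComponent =>
        if c = G.connectedComponentMk v then (none : Option G'.ConnectedComponent) else some (π c)) := by
    intro c₁ c₂ hc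
    by_cases h1 : c₁ = G.connectedComponentMk v <;> by_cases h2 : c₂ = G.connectedComponentMk v <;>
      simp [h1, h2] at hc ⊢
    revert hc h1 h2
    refine ConnectedComponent.ind₂ (fun a b h1 h2 hc => ?_) c₁ c₂
    simp only [π, ConnectedComponent.map_mk, Hom.ofLE_apply,
      ConnectedComponent.eq] at hc ⊢
    simp only [G', hco] at hc
    rcases reach_insert hc with hr | ⟨ha, hb⟩ | ⟨ha, hb⟩
    · exact hr
    · exact absurd (ConnectedComponent.sound hb.symm) h2
    · exact absurd (ConnectedComponent.sound ha) h1
  have := Nat.card_le_card_of_injective _ hinj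
  have hopt : Nat.card (Option G'.ConnectedComponent) = Nat.card G'.ConnectedComponent + 1 := by
    have : Fintype G'.ConnectedComponent := Fintype.ofFinite _
    simp [Nat.card_eq_fintype_card]
  rw [hopt] at this
  exact this

lemma numComp_insert_diag {s : Finset (Sym2 V)} {e : Sym2 V} (he : e.IsDiag) :
    numComp (insert e s) = numComp s := by
  have hg : fromEdgeSet ((insert e s : Finset (Sym2 V)) : Set (Sym2 V))
      = fromEdgeSet (s : Set (Sym2 V)) := by
    ext a b
    simp only [Finset.coe_insert, fromEdgeSet_adj, Set.mem_insert_iff, Finset.mem_coe]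
    constructor
    · rintro ⟨h | h, hne⟩
      · exfalso; rw [← h] at he; exact hne (Sym2.mk_isDiag_iff.mp he)
      · exact ⟨h, hne⟩
    · rintro ⟨h, hne⟩; exact ⟨Or.inr h, hne⟩
  unfold numComp
  rw [hg]

lemma numComp_single (e : Sym2 V) {s t : Finset (Sym2 V)} (hst : s ⊆ t) :
    numComp (insert e s) + numComp t ≤ numComp s + numComp (insert e t) := by
  induction e with
  | _ u v =>
    by_cases huv : u = v
    · subst huv
      rw [numComp_insert_diag (by simp), numComp_insert_diag (by simp)]
    by_cases hr : (fromEdgeSet (s : Set (Sym2 V))).Reachable u v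
    · have hr' : (fromEdgeSet (t : Set (Sym2 V))).Reachable u v :=
        hr.mono (fromEdgeSet_mono (by exact_mod_cast hst))
      rw [numComp_insert_eq hr, numComp_insert_eq hr']
    · have h1 := numComp_insert_lt huv hr
      have h2 := numComp_le_insert (s := t) (u := u) (v := v)
      omega

lemma numComp_union (D : Finset (Sym2 V)) : ∀ s t : Finset (Sym2 V), s ⊆ t →
    numComp (s ∪ D) + numComp t ≤ numComp s + numComp (t ∪ D) := by
  classical
  induction D using Finset.induction with
  | empty => intro s t _; simp
  | insert e D hnotmem ih =>
    intro s t hst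
    have h1 := ih s t hst
    have h2 := numComp_single e (Finset.union_subset_union hst (Finset.Subset.refl D))
    rw [Finset.union_insert, Finset.union_insert]
    omega

lemma numComp_supermodular (A B : Finset (Sym2 V)) :
    numComp A + numComp B ≤ numComp (A ∩ B) + numComp (A ∪ B) := by
  classical
  have h := numComp_union (B \ A) (A ∩ B) A (Finset.inter_subset_left)
  rw [show A ∩ B ∪ B \ A = B by ext x; simp; tauto,
      Finset.union_sdiff_self_eq_union] at h
  omega

end Aux


section Aux2

variable {V : Type} [Fintype V] [DecidableEq V]

lemma rcWeight_pos {E : Finset (Sym2 V)} {p q : ℝ} (hp : p ∈ Set.Ioo (0 : ℝ) 1) (hq : 1 ≤ q)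
    (A : Finset (Sym2 V)) : 0 < rcWeight E p q A := by
  have h1 : (0:ℝ) < p := hp.1
  have h2 : (0:ℝ) < 1 - p := by have := hp.2; linarith
  have h3 : (0:ℝ) < q := by linarith
  unfold rcWeight
  positivity

lemma rcWeight_supermodular {E : Finset (Sym2 V)} {p q : ℝ} (hp : p ∈ Set.Ioo (0 : ℝ) 1)
    (hq : 1 ≤ q) {A B : Finset (Sym2 V)} (hA : A ⊆ E) (hB : B ⊆ E) :
    rcWeight E p q A * rcWeight E p q B ≤ rcWeight E p q (A ∩ B) * rcWeight E p q (A ∪ B) := by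
  have hc : (A ∩ B).card + (A ∪ B).card = A.card + B.card := by
    have := Finset.card_union_add_card_inter A B
    omega
  have hAc : A.card ≤ E.card := Finset.card_le_card hA
  have hBc : B.card ≤ E.card := Finset.card_le_card hB
  have hUc : (A ∪ B).card ≤ E.card := Finset.card_le_card (Finset.union_subset hA hB)
  have hIc : (A ∩ B).card ≤ E.card := le_trans (Finset.card_le_card Finset.inter_subset_left) hAc
  have hd : (E.card - A.card) + (E.card - B.card)
      = (E.card - (A ∩ B).card) + (E.card - (A ∪ B).card) := by omega
  have e1 : p ^ A.card * p ^ B.card = p ^ (A ∩ B).card * p ^ (A ∪ B).card := by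
    rw [← pow_add, ← pow_add, hc]
  have e2 : (1 - p) ^ (E.card - A.card) * (1 - p) ^ (E.card - B.card)
      = (1 - p) ^ (E.card - (A ∩ B).card) * (1 - p) ^ (E.card - (A ∪ B).card) := by
    rw [← pow_add, ← pow_add, hd]
  have e3 : q ^ numComp A * q ^ numComp B ≤ q ^ numComp (A ∩ B) * q ^ numComp (A ∪ B) := by
    rw [← pow_add, ← pow_add]
    exact pow_le_pow_right₀ hq (numComp_supermodular A B)
  have h1 : (0:ℝ) < p := hp.1
  have h2 : (0:ℝ) < 1 - p := by have := hp.2; linarith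
  calc rcWeight E p q A * rcWeight E p q B
      = (p ^ A.card * p ^ B.card) * ((1 - p) ^ (E.card - A.card) * (1 - p) ^ (E.card - B.card))
          * (q ^ numComp A * q ^ numComp B) := by unfold rcWeight; ring
    _ = (p ^ (A ∩ B).card * p ^ (A ∪ B).card) *
          ((1 - p) ^ (E.card - (A ∩ B).card) * (1 - p) ^ (E.card - (A ∪ B).card))
          * (q ^ numComp A * q ^ numComp B) := by rw [e1, e2]
    _ ≤ (p ^ (A ∩ B).card * p ^ (A ∪ B).card) *
          ((1 - p) ^ (E.card - (A ∩ B).card) * (1 - p) ^ (E.card - (A ∪ B).card))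
          * (q ^ numComp (A ∩ B) * q ^ numComp (A ∪ B)) := by
        apply mul_le_mul_of_nonneg_left e3
        positivity
    _ = rcWeight E p q (A ∩ B) * rcWeight E p q (A ∪ B) := by unfold rcWeight; ring

end Aux2

/-- Positive association (FKG) for the random-cluster measure: if `p ∈ (0,1)` and
`q ≥ 1`, then `φ_{p,q}(fg) ≥ φ_{p,q}(f) φ_{p,q}(g)` for increasing `f`, `g`. -/
theorem rc_FKG {V : Type} [Fintype V] [DecidableEq V]
    (E : Finset (Sym2 V)) (hE : ∀ e ∈ E, ¬ e.IsDiag)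
    (p q : ℝ) (hp : p ∈ Set.Ioo (0 : ℝ) 1) (hq : 1 ≤ q)
    (f g : Finset (Sym2 V) → ℝ)
    (hf : ∀ A B : Finset (Sym2 V), A ⊆ B → B ⊆ E → f A ≤ f B)
    (hg : ∀ A B : Finset (Sym2 V), A ⊆ B → B ⊆ E → g A ≤ g B) :
    rcExp E p q f * rcExp E p q g ≤ rcExp E p q (fun A => f A * g A) := by
  classical
  set w : Finset (Sym2 V) → ℝ := fun A => if A ⊆ E then rcWeight E p q A else 0 with hw
  have hw0 : 0 ≤ w := by
    intro A
    by_cases h : A ⊆ E <;> simp [w, h]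
    exact (rcWeight_pos hp hq A).le
  set F : Finset (Sym2 V) → ℝ := fun A => f (A ∩ E) - f ∅ with hF
  set G : Finset (Sym2 V) → ℝ := fun A => g (A ∩ E) - g ∅ with hG
  have hF0 : 0 ≤ F := fun A => sub_nonneg.mpr
    (hf ∅ (A ∩ E) (Finset.empty_subset _) Finset.inter_subset_right)
  have hG0 : 0 ≤ G := fun A => sub_nonneg.mpr
    (hg ∅ (A ∩ E) (Finset.empty_subset _) Finset.inter_subset_right)
  have hFm : Monotone F := fun a b hab => sub_le_sub_right
    (hf (a ∩ E) (b ∩ E) (Finset.inter_subset_inter hab (Finset.Subset.refl E))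
      Finset.inter_subset_right) _
  have hGm : Monotone G := fun a b hab => sub_le_sub_right
    (hg (a ∩ E) (b ∩ E) (Finset.inter_subset_inter hab (Finset.Subset.refl E))
      Finset.inter_subset_right) _
  have hwsup : ∀ a b : Finset (Sym2 V), w a * w b ≤ w (a ⊓ b) * w (a ⊔ b) := by
    intro a b
    by_cases ha : a ⊆ E
    · by_cases hb : b ⊆ E
      · have hab : a ⊓ b ⊆ E := le_trans inf_le_left ha
        have hab' : a ⊔ b ⊆ E := sup_le ha hb
        simp only [w, if_pos ha, if_pos hb, if_pos hab, if_pos hab']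
        rw [Finset.inf_eq_inter, Finset.sup_eq_union]
        exact rcWeight_supermodular hp hq ha hb
      · simp only [w, if_neg hb, mul_zero]
        exact mul_nonneg (hw0 _) (hw0 _)
    · simp only [w, if_neg ha, zero_mul]
      exact mul_nonneg (hw0 _) (hw0 _)
  have key := fkg (μ := w) (f := F) (g := G) hw0 hF0 hG0 hFm hGm hwsup
  -- convert sums over univ to sums over the powerset
  have hconv : ∀ h : Finset (Sym2 V) → ℝ,
      (∑ a : Finset (Sym2 V), w a * h a) = ∑ A ∈ E.powerset, rcWeight E p q A * h A := by
    intro h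
    rw [← Finset.sum_subset (Finset.subset_univ E.powerset)]
    · refine Finset.sum_congr rfl (fun A hA => ?_)
      simp [w, Finset.mem_powerset.mp hA]
    · intro x _ hx
      have hxE : ¬ x ⊆ E := fun hsub => hx (Finset.mem_powerset.mpr hsub)
      simp [w, hxE]
  have hconv1 : (∑ a : Finset (Sym2 V), w a) = ZRC E p q := by
    have := hconv (fun _ => 1)
    simpa [ZRC] using this
  rw [hconv1, hconv F, hconv G, hconv (fun A => F A * G A)] at key
  set Z := ZRC E p q with hZdef
  set Sf := ∑ A ∈ E.powerset, rcWeight E p q A * f A with hSf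
  set Sg := ∑ A ∈ E.powerset, rcWeight E p q A * g A with hSg
  set Sfg := ∑ A ∈ E.powerset, rcWeight E p q A * (f A * g A) with hSfg
  have hZpos : 0 < Z := by
    rw [hZdef]
    unfold ZRC
    refine Finset.sum_pos (fun A _ => rcWeight_pos hp hq A) ⟨∅, Finset.empty_mem_powerset E⟩
  set a₀ := f ∅ with ha₀
  set b₀ := g ∅ with hb₀
  have hFeq : ∀ A ∈ E.powerset, rcWeight E p q A * F A
      = rcWeight E p q A * f A - a₀ * rcWeight E p q A := by
    intro A hA
    have hAE : A ∩ E = A := Finset.inter_eq_left.mpr (Finset.mem_powerset.mp hA)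
    simp only [F, hAE]
    ring
  have hGeq : ∀ A ∈ E.powerset, rcWeight E p q A * G A
      = rcWeight E p q A * g A - b₀ * rcWeight E p q A := by
    intro A hA
    have hAE : A ∩ E = A := Finset.inter_eq_left.mpr (Finset.mem_powerset.mp hA)
    simp only [G, hAE]
    ring
  have hFGeq : ∀ A ∈ E.powerset, rcWeight E p q A * (F A * G A)
      = rcWeight E p q A * (f A * g A) - a₀ * (rcWeight E p q A * g A)
        - b₀ * (rcWeight E p q A * f A) + a₀ * b₀ * rcWeight E p q A := by
    intro A hA
    have hAE : A ∩ E = A := Finset.inter_eq_left.mpr (Finset.mem_powerset.mp hA)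
    simp only [F, G, hAE]
    ring
  rw [Finset.sum_congr rfl hFeq, Finset.sum_congr rfl hGeq, Finset.sum_congr rfl hFGeq] at key
  simp only [Finset.sum_sub_distrib, Finset.sum_add_distrib, ← Finset.mul_sum] at key
  have hZrc : ∑ A ∈ E.powerset, rcWeight E p q A = Z := rfl
  rw [hZrc] at key
  have hmain : Sf * Sg ≤ Z * Sfg := by nlinarith [key]
  -- final step
  show Sf / Z * (Sg / Z) ≤ Sfg / Z
  rw [div_mul_div_comm, div_le_div_iff₀ (by positivity) hZpos]
  nlinarith [mul_le_mul_of_nonneg_right hmain (le_of_lt hZpos)]
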